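/- arXiv:1704.01862 — 2 statements merged into one kernel-verified Lean document; each statement's English description precedes it below -/
import Mathlib

section
/- Let 0 < ε ≤ 1/2, let X ⊆ ℝ^d be finite and (k,ε)-irreducible with optimal k-means partition X₁,…,X_k, let 1 ≤ i < k, and let C_i be a set of i centers satisfying the invariant P(i). Let S consist of N = ⌈2¹²·k³/ε²⌉ independent D²-samples from X w.r.t. C_i, and for j ∈ {i+1,…,k} let |S_j| be the number of samples lying in X_j. Then the probability that the maximum of |S_j| over j ∈ {i+1,…,k} is not attained at an index of J (i.e., max_{j∈J} |S_j| ≤ max_{j∈{i+1,…,k}∖J} |S_j| when {i+1,…,k}∖J is nonempty) is at most 1/(4k). -/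
open Finset
open scoped BigOperators
open Classical

noncomputable section

/-- Points of `ℝ^d`. -/
abbrev Pt (d : ℕ) := EuclideanSpace ℝ (Fin d)

/-- `Φ(C, X) = Σ_{x ∈ X} min_{c ∈ C} ‖x - c‖²`. -/
noncomputable def Phi {d : ℕ} (C X : Finset (Pt d)) : ℝ :=
  ∑ x ∈ X, sInf ((fun c => ‖x - c‖ ^ 2) '' (C : Set (Pt d)))

/-- The centroid `μ(X)` of a finite set of points. -/
noncomputable def ctr {d : ℕ} (X : Finset (Pt d)) : Pt d :=
  (X.card : ℝ)⁻¹ • ∑ x ∈ X, x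

/-- `Δ₁(X) = Φ({μ(X)}, X)`. -/
noncomputable def Delta1 {d : ℕ} (X : Finset (Pt d)) : ℝ := Phi {ctr X} X

/-- `Δ_k(X)`: the optimal `k`-means cost of `X`. -/
noncomputable def DeltaK {d : ℕ} (k : ℕ) (X : Finset (Pt d)) : ℝ :=
  sInf ((fun C => Phi C X) '' {C : Finset (Pt d) | C.card = k})

/-- `X₁, …, X_k` is an optimal `k`-means partition of `X`. -/
def IsOptPartition {d : ℕ} (k : ℕ) (X : Finset (Pt d)) (Xs : Fin k → Finset (Pt d)) : Prop :=
  (∀ j, (Xs j).Nonempty) ∧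
  (∀ j l, j ≠ l → Disjoint (Xs j) (Xs l)) ∧
  Finset.univ.biUnion Xs = X ∧
  ∑ j, Delta1 (Xs j) = DeltaK k X

/-- `X` is `(k, ε)`-irreducible: `Δ_{k-1}(X) ≥ (1+ε)·Δ_k(X)`. -/
def KIrreducible {d : ℕ} (k : ℕ) (ε : ℝ) (X : Finset (Pt d)) : Prop :=
  (1 + ε) * DeltaK k X ≤ DeltaK (k - 1) X

/-- The invariant `P(i)`: `Ci` consists of the centers `c r` for `r < i` (clusters reindexed
so that the covered clusters come first), each `c r` is a `(1 + ε/16)`-good center for the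
optimal cluster `Xs r`, and `Φ(Ci, X) > 0`. -/
def InvariantP {d k : ℕ} (ε : ℝ) (X : Finset (Pt d)) (Xs : Fin k → Finset (Pt d))
    (i : ℕ) (c : Fin k → Pt d) (Ci : Finset (Pt d)) : Prop :=
  Ci = Finset.image c (Finset.univ.filter (fun r : Fin k => r.val < i)) ∧
  (∀ r : Fin k, r.val < i → Phi {c r} (Xs r) ≤ (1 + ε / 16) * Delta1 (Xs r)) ∧
  0 < Phi Ci X

lemma bdd_zero {d : ℕ} (C : Finset (Pt d)) (x : Pt d) :
    0 ∈ lowerBounds ((fun c => ‖x - c‖ ^ 2) '' (C : Set (Pt d))) := by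
  rintro y ⟨c, _, rfl⟩; positivity

lemma Phi_nonneg {d : ℕ} (C X : Finset (Pt d)) : 0 ≤ Phi C X := by
  apply Finset.sum_nonneg
  intro x _
  exact Real.sInf_nonneg fun y hy => bdd_zero C x hy

lemma Phi_singleton {d : ℕ} (C : Finset (Pt d)) (x : Pt d) :
    Phi C {x} = sInf ((fun c => ‖x - c‖ ^ 2) '' (C : Set (Pt d))) := by
  simp [Phi]

lemma Phi_eq_sum {d : ℕ} (C X : Finset (Pt d)) : Phi C X = ∑ x ∈ X, Phi C {x} := by
  simp [Phi]

lemma Phi_le_of_mem {d : ℕ} {C : Finset (Pt d)} {c0 : Pt d} (hc : c0 ∈ C) (X : Finset (Pt d)) :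
    Phi C X ≤ Phi {c0} X := by
  apply Finset.sum_le_sum
  intro x _
  have h1 : ((({c0} : Finset (Pt d)) : Set (Pt d))) = {c0} := by simp
  rw [h1, Set.image_singleton, csInf_singleton]
  exact csInf_le ⟨0, bdd_zero C x⟩ ⟨c0, by simpa using hc, rfl⟩

lemma Phi_anti {d : ℕ} {C C' : Finset (Pt d)} (h : C ⊆ C') (hC : C.Nonempty)
    (X : Finset (Pt d)) : Phi C' X ≤ Phi C X := by
  apply Finset.sum_le_sum
  intro x _
  apply csInf_le_csInf ⟨0, bdd_zero C' x⟩
  · exact Set.Nonempty.image _ (by exact_mod_cast hC)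
  · exact Set.image_mono (by exact_mod_cast h)

lemma DeltaK_le' {d : ℕ} (k : ℕ) (X C : Finset (Pt d)) (h : C.card = k) :
    DeltaK k X ≤ Phi C X := by
  apply csInf_le
  · exact ⟨0, by rintro y ⟨C', _, rfl⟩; exact Phi_nonneg _ _⟩
  · exact ⟨C, h, rfl⟩

lemma mass_setup {d k : ℕ} (ε : ℝ) (hε0 : 0 < ε) (hε : ε ≤ 1 / 2)
    (X : Finset (Pt d)) (hirr : KIrreducible k ε X)
    (Xs : Fin k → Finset (Pt d)) (hopt : IsOptPartition k X Xs)
    (i : ℕ) (hi : 1 ≤ i) (hik : i < k)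
    (c : Fin k → Pt d) (Ci : Finset (Pt d)) (hinv : InvariantP ε X Xs i c Ci) :
    ∃ jstar : Fin k, i ≤ jstar.val ∧
      (ε / (8 * k)) * Phi Ci X ≤ Phi Ci (Xs jstar) ∧
      (ε / (2 * k)) * Phi Ci X ≤ Phi Ci (Xs jstar) := by
  obtain ⟨hXsne, hdisj, hbiU, hsum⟩ := hopt
  obtain ⟨hCieq, hgood, hΦpos⟩ := hinv
  set ΦX := Phi Ci X with hΦXdef
  have hk0 : 0 < k := by omega
  have hK2 : (2 : ℝ) ≤ (k : ℝ) := by exact_mod_cast (by omega : 2 ≤ k)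
  have hx : ∃ x ∈ X, 0 < Phi Ci {x} := by
    by_contra h
    push_neg at h
    have : ΦX ≤ 0 := by
      rw [hΦXdef, Phi_eq_sum]; exact Finset.sum_nonpos h
    linarith
  obtain ⟨x0, hx0X, hx0⟩ := hx
  have hCine : Ci.Nonempty := by
    by_contra h
    rw [Finset.not_nonempty_iff_eq_empty] at h
    rw [Phi_singleton, h] at hx0
    simp [Real.sInf_empty] at hx0
  obtain ⟨c0, hc0⟩ := hCine
  have hx0c0 : x0 ≠ c0 := by
    intro h
    have hmem : (0 : ℝ) ∈ ((fun c => ‖x0 - c‖ ^ 2) '' (Ci : Set (Pt d))) :=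
      ⟨c0, by simpa using hc0, by simp [h]⟩
    have := csInf_le ⟨0, bdd_zero Ci x0⟩ hmem
    rw [Phi_singleton] at hx0
    linarith
  have hInf : Infinite (Pt d) := by
    apply Infinite.of_injective (fun r : ℝ => r • (x0 - c0) + c0)
    intro a b hab
    have hv : x0 - c0 ≠ 0 := sub_ne_zero.mpr hx0c0
    have : a • (x0 - c0) = b • (x0 - c0) := by
      have := congrArg (fun z => z - c0) hab
      simpa using this
    exact smul_left_injective ℝ hv this
  have hCicard : Ci.card ≤ k - 1 := by
    rw [hCieq]
    calc (Finset.image c (Finset.univ.filter (fun r : Fin k => r.val < i))).card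
        ≤ (Finset.univ.filter (fun r : Fin k => r.val < i)).card := Finset.card_image_le
      _ ≤ (Finset.range i).card := by
          apply Finset.card_le_card_of_injOn (fun r : Fin k => r.val)
          · intro r hr; simp at hr ⊢; exact hr
          · intro a _ b _ h; exact Fin.val_injective h
      _ = i := Finset.card_range i
      _ ≤ k - 1 := by omega
  obtain ⟨C', hsub, hC'card⟩ := Infinite.exists_superset_card_eq Ci (k - 1) hCicard
  have hCine : Ci.Nonempty := ⟨c0, hc0⟩
  have hDk1 : DeltaK (k - 1) X ≤ ΦX :=
    le_trans (DeltaK_le' (k - 1) X C' hC'card) (Phi_anti hsub hCine X)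
  set Δk := DeltaK k X with hΔkdef
  have hΔk_nonneg : 0 ≤ Δk := by
    rw [← hsum]
    exact Finset.sum_nonneg fun j _ => Phi_nonneg _ _
  have hΔk_le : (1 + ε) * Δk ≤ ΦX := le_trans hirr hDk1
  have hXsub : ∀ j, Xs j ⊆ X := by
    intro j
    rw [← hbiU]
    exact Finset.subset_biUnion_of_mem Xs (Finset.mem_univ j)
  have hpart : ΦX = ∑ j, Phi Ci (Xs j) := by
    rw [hΦXdef, Phi_eq_sum, ← hbiU,
      Finset.sum_biUnion (fun j _ l _ h => hdisj j l h)]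
    exact Finset.sum_congr rfl fun j _ => (Phi_eq_sum Ci (Xs j)).symm
  have hcov : ∑ j ∈ Finset.univ.filter (fun j : Fin k => j.val < i), Phi Ci (Xs j)
      ≤ (1 + ε / 16) * Δk := by
    have h1 : ∀ j ∈ Finset.univ.filter (fun j : Fin k => j.val < i),
        Phi Ci (Xs j) ≤ (1 + ε / 16) * Delta1 (Xs j) := by
      intro j hj
      simp only [Finset.mem_filter, Finset.mem_univ, true_and] at hj
      have hcj : c j ∈ Ci := by
        rw [hCieq]
        exact Finset.mem_image_of_mem c (by simp [hj])
      exact le_trans (Phi_le_of_mem hcj (Xs j)) (hgood j hj)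
    calc ∑ j ∈ Finset.univ.filter (fun j : Fin k => j.val < i), Phi Ci (Xs j)
        ≤ ∑ j ∈ Finset.univ.filter (fun j : Fin k => j.val < i),
            (1 + ε / 16) * Delta1 (Xs j) := Finset.sum_le_sum h1
      _ = (1 + ε / 16) * ∑ j ∈ Finset.univ.filter (fun j : Fin k => j.val < i),
            Delta1 (Xs j) := by rw [Finset.mul_sum]
      _ ≤ (1 + ε / 16) * ∑ j, Delta1 (Xs j) := by
          apply mul_le_mul_of_nonneg_left _ (by linarith)
          apply Finset.sum_le_sum_of_subset_of_nonneg (Finset.filter_subset _ _)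
          intro j _ _; exact Phi_nonneg _ _
      _ = (1 + ε / 16) * Δk := by rw [hsum]
  have hsplit : ΦX = (∑ j ∈ Finset.univ.filter (fun j : Fin k => j.val < i), Phi Ci (Xs j))
      + ∑ j ∈ Finset.univ.filter (fun j : Fin k => i ≤ j.val), Phi Ci (Xs j) := by
    rw [hpart, ← Finset.sum_filter_add_sum_filter_not Finset.univ (fun j : Fin k => j.val < i)]
    congr 1
    apply Finset.sum_congr _ (fun _ _ => rfl)
    apply Finset.filter_congr
    intro j _
    simp [Nat.not_lt]
  have huncov : (5 * ε / 8) * ΦX ≤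
      ∑ j ∈ Finset.univ.filter (fun j : Fin k => i ≤ j.val), Phi Ci (Xs j) := by
    nlinarith [mul_nonneg (mul_nonneg hε0.le hΔk_nonneg) (by linarith : (0:ℝ) ≤ 1 - 2 * ε),
      mul_le_mul_of_nonneg_left hΔk_le (by linarith : (0:ℝ) ≤ 1 - 5 * ε / 8)]
  set L := Finset.univ.filter (fun j : Fin k => i ≤ j.val ∧
    ¬((ε / (8 * k)) * ΦX ≤ Phi Ci (Xs j))) with hLdef
  set H := Finset.univ.filter (fun j : Fin k => i ≤ j.val ∧
    (ε / (8 * k)) * ΦX ≤ Phi Ci (Xs j)) with hHdef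
  have hLcard : (L.card : ℝ) ≤ k := by
    exact_mod_cast le_trans (Finset.card_filter_le _ _) (le_of_eq (Finset.card_fin k))
  have hHcard : (H.card : ℝ) ≤ k := by
    exact_mod_cast le_trans (Finset.card_filter_le _ _) (le_of_eq (Finset.card_fin k))
  have hLsum : ∑ j ∈ L, Phi Ci (Xs j) ≤ (ε / 8) * ΦX := by
    have h1 : ∑ j ∈ L, Phi Ci (Xs j) ≤ L.card • ((ε / (8 * k)) * ΦX) := by
      apply Finset.sum_le_card_nsmul
      intro j hj
      simp only [hLdef, Finset.mem_filter, Finset.mem_univ, true_and] at hj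
      linarith [(lt_of_not_ge hj.2).le]
    rw [nsmul_eq_mul] at h1
    have h2 : (L.card : ℝ) * ((ε / (8 * k)) * ΦX) ≤ (k : ℝ) * ((ε / (8 * k)) * ΦX) := by
      apply mul_le_mul_of_nonneg_right hLcard
      positivity
    have h3 : (k : ℝ) * ((ε / (8 * k)) * ΦX) = (ε / 8) * ΦX := by
      field_simp
    linarith
  have hHLsplit : (∑ j ∈ Finset.univ.filter (fun j : Fin k => i ≤ j.val), Phi Ci (Xs j))
      = (∑ j ∈ H, Phi Ci (Xs j)) + ∑ j ∈ L, Phi Ci (Xs j) := by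
    rw [hHdef, hLdef, ← Finset.filter_filter, ← Finset.filter_filter,
      Finset.sum_filter_add_sum_filter_not]
  have hHsum : (ε / 2) * ΦX ≤ ∑ j ∈ H, Phi Ci (Xs j) := by
    nlinarith
  have hHne : H.Nonempty := by
    by_contra h
    rw [Finset.not_nonempty_iff_eq_empty] at h
    rw [h, Finset.sum_empty] at hHsum
    nlinarith
  have hexists : ∃ j ∈ H, (ε / (2 * k)) * ΦX ≤ Phi Ci (Xs j) := by
    apply Finset.exists_le_of_sum_le hHne
    calc ∑ _j ∈ H, (ε / (2 * k)) * ΦX = (H.card : ℝ) * ((ε / (2 * k)) * ΦX) := by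
          rw [Finset.sum_const, nsmul_eq_mul]
      _ ≤ (k : ℝ) * ((ε / (2 * k)) * ΦX) := by
          apply mul_le_mul_of_nonneg_right hHcard; positivity
      _ = (ε / 2) * ΦX := by field_simp
      _ ≤ ∑ j ∈ H, Phi Ci (Xs j) := hHsum
  obtain ⟨jstar, hjH, hjbig⟩ := hexists
  simp only [hHdef, Finset.mem_filter, Finset.mem_univ, true_and] at hjH
  exact ⟨jstar, hjH.1, hjH.2, hjbig⟩

lemma prob_bound {α : Type*} [Fintype α] {ι : Type*} (N : ℕ) (p : α → ℝ)
    (hp : ∀ x, 0 ≤ p x) (B : Finset (Fin N → α)) (L : Finset ι) (w : ι → α → ℝ)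
    (hw : ∀ j x, 0 ≤ w j x)
    (hbad : ∀ s ∈ B, 1 ≤ ∑ j ∈ L, ∏ t, w j (s t))
    (bound : ℝ)
    (hper : ∀ j ∈ L, ∑ x, p x * w j x ≤ bound)
    (hper0 : ∀ j ∈ L, 0 ≤ ∑ x, p x * w j x) :
    ∑ s ∈ B, ∏ t, p (s t) ≤ L.card * bound ^ N := by
  calc ∑ s ∈ B, ∏ t, p (s t)
      ≤ ∑ s ∈ B, (∏ t, p (s t)) * (∑ j ∈ L, ∏ t, w j (s t)) := by
        apply Finset.sum_le_sum; intro s hs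
        nth_rewrite 1 [← mul_one (∏ t, p (s t))]
        exact mul_le_mul_of_nonneg_left (hbad s hs)
          (Finset.prod_nonneg fun t _ => hp _)
    _ ≤ ∑ s : (Fin N → α), (∏ t, p (s t)) * (∑ j ∈ L, ∏ t, w j (s t)) := by
        apply Finset.sum_le_sum_of_subset_of_nonneg (Finset.subset_univ B)
        intro s _ _
        exact mul_nonneg (Finset.prod_nonneg fun t _ => hp _)
          (Finset.sum_nonneg fun j _ => Finset.prod_nonneg fun t _ => hw j _)
    _ = ∑ j ∈ L, ∑ s : (Fin N → α), ∏ t, (p (s t) * w j (s t)) := by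
        rw [Finset.sum_congr rfl fun s _ => Finset.mul_sum _ _ _, Finset.sum_comm]
        apply Finset.sum_congr rfl; intro j _
        apply Finset.sum_congr rfl; intro s _
        rw [← Finset.prod_mul_distrib]
    _ = ∑ j ∈ L, (∑ x, p x * w j x) ^ N := by
        apply Finset.sum_congr rfl; intro j _
        have h := Finset.prod_univ_sum (fun _ : Fin N => (Finset.univ : Finset α))
          (fun _ x => p x * w j x)
        rw [Fintype.piFinset_univ] at h
        rw [← h, Finset.prod_const, Finset.card_univ, Fintype.card_fin]
    _ ≤ ∑ j ∈ L, bound ^ N :=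
        Finset.sum_le_sum fun j hj => pow_le_pow_left₀ (hper0 j hj) (hper j hj) N
    _ = L.card * bound ^ N := by rw [Finset.sum_const, nsmul_eq_mul]


set_option maxHeartbeats 2000000 in
/-- Under the invariant `P(i)` (clusters reindexed so the covered clusters
are `X₁, …, X_i`), let `S` consist of `N = ⌈2¹²·k³/ε²⌉` independent `D²`-samples from `X`
w.r.t. `C_i`, and for an uncovered cluster `X_j` let `|S_j|` be the number of samples in
`X_j`. With `J = {j ∈ {i+1,…,k} : Φ(C_i, X_j) ≥ (ε/(8k))·Φ(C_i, X)}`, the probability that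
the maximum of `|S_j|` over uncovered `j` is not attained on `J` (i.e. `{i+1,…,k} ∖ J` is
nonempty and `max_{j∈J} |S_j| ≤ max_{j∈{i+1,…,k}∖J} |S_j|`) is at most `1/(4k)`. -/
theorem stmt_13 {d k : ℕ} (ε : ℝ) (hε0 : 0 < ε) (hε : ε ≤ 1 / 2)
    (X : Finset (Pt d)) (hirr : KIrreducible k ε X)
    (Xs : Fin k → Finset (Pt d)) (hopt : IsOptPartition k X Xs)
    (i : ℕ) (hi : 1 ≤ i) (hik : i < k)
    (c : Fin k → Pt d) (Ci : Finset (Pt d)) (hinv : InvariantP ε X Xs i c Ci)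
    (N : ℕ) (hN : N = ⌈(2 ^ 12 * k ^ 3 : ℝ) / ε ^ 2⌉₊) :
    ∑ s ∈ (Finset.univ : Finset (Fin N → {x // x ∈ X})).filter
        (fun s =>
          (Finset.univ.filter (fun j : Fin k => i ≤ j.val ∧
              ¬((ε / (8 * k)) * Phi Ci X ≤ Phi Ci (Xs j)))).Nonempty ∧
          (Finset.univ.filter (fun j : Fin k => i ≤ j.val ∧
              (ε / (8 * k)) * Phi Ci X ≤ Phi Ci (Xs j))).sup
              (fun j => (Finset.univ.filter (fun t : Fin N => (s t : Pt d) ∈ Xs j)).card) ≤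
            (Finset.univ.filter (fun j : Fin k => i ≤ j.val ∧
                ¬((ε / (8 * k)) * Phi Ci X ≤ Phi Ci (Xs j)))).sup
              (fun j => (Finset.univ.filter (fun t : Fin N => (s t : Pt d) ∈ Xs j)).card)),
      ∏ t : Fin N, (Phi Ci {(s t : Pt d)} / Phi Ci X) ≤
    1 / (4 * k) := by
  obtain ⟨jstar, hjsi, hjsheavy, hjsbig⟩ :=
    mass_setup ε hε0 hε X hirr Xs hopt i hi hik c Ci hinv
  obtain ⟨hXsne, hdisj, hbiU, hsum⟩ := hopt
  obtain ⟨hCieq, hgood, hΦpos⟩ := hinv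
  set ΦX := Phi Ci X with hΦXdef
  have hk0 : 0 < k := by omega
  have hK2 : (2 : ℝ) ≤ (k : ℝ) := by exact_mod_cast (by omega : 2 ≤ k)
  set δ : ℝ := ε / (8 * k) with hδdef
  have hδpos : 0 < δ := by rw [hδdef]; positivity
  have hδle : δ ≤ 1 / 32 := by
    rw [hδdef, div_le_iff₀ (by positivity)]
    nlinarith
  have hXsub : ∀ j, Xs j ⊆ X := by
    intro j
    rw [← hbiU]
    exact Finset.subset_biUnion_of_mem Xs (Finset.mem_univ j)
  have hpart : ΦX = ∑ j, Phi Ci (Xs j) := by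
    rw [hΦXdef, Phi_eq_sum, ← hbiU,
      Finset.sum_biUnion (fun j _ l _ h => hdisj j l h)]
    exact Finset.sum_congr rfl fun j _ => (Phi_eq_sum Ci (Xs j)).symm
  have hjs_le : Phi Ci (Xs jstar) ≤ ΦX := by
    rw [hpart]
    exact Finset.single_le_sum (fun j _ => Phi_nonneg _ _) (Finset.mem_univ jstar)
  have hjs4 : 4 * δ * ΦX ≤ Phi Ci (Xs jstar) := by
    have : ε / (2 * (k : ℝ)) = 4 * δ := by
      rw [hδdef]; field_simp; ring
    rw [this] at hjsbig
    linarith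
  -- the sampling distribution and the weights
  set p : {x // x ∈ X} → ℝ := fun x => Phi Ci {(x : Pt d)} / ΦX with hpdef
  have hpnonneg : ∀ x, 0 ≤ p x := fun x => div_nonneg (Phi_nonneg _ _) hΦpos.le
  set w : Fin k → Pt d → ℝ := fun j x =>
    (if x ∈ Xs j then (2 : ℝ) else 1) * (if x ∈ Xs jstar then (1 / 2 : ℝ) else 1) with hwdef
  have hwpos : ∀ j x, 0 < w j x := by
    intro j x
    rw [hwdef]
    dsimp only
    split <;> split <;> norm_num
  -- sets L and H (matching the statement)
  set L := Finset.univ.filter (fun j : Fin k => i ≤ j.val ∧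
    ¬(δ * ΦX ≤ Phi Ci (Xs j))) with hLdef
  set H := Finset.univ.filter (fun j : Fin k => i ≤ j.val ∧
    δ * ΦX ≤ Phi Ci (Xs j)) with hHdef
  have hjsH : jstar ∈ H := by
    rw [hHdef, Finset.mem_filter]
    exact ⟨Finset.mem_univ _, hjsi, hjsheavy⟩
  -- per-trial computation for light clusters
  have hper : ∀ j ∈ L,
      (∑ x : {x // x ∈ X}, p x * w j (x : Pt d)) ≤ 1 - δ ∧
      0 ≤ ∑ x : {x // x ∈ X}, p x * w j (x : Pt d) := by
    intro j hjL
    rw [hLdef, Finset.mem_filter] at hjL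
    obtain ⟨-, hji, hjlight⟩ := hjL
    have hjne : j ≠ jstar := by
      rintro rfl
      exact hjlight hjsheavy
    have hdisjj := hdisj j jstar hjne
    have hpt : ∀ x ∈ X, Phi Ci {x} * w j x = Phi Ci {x}
        + (if x ∈ Xs j then Phi Ci {x} else 0)
        - (1 / 2) * (if x ∈ Xs jstar then Phi Ci {x} else 0) := by
      intro x _
      have hnb : ¬(x ∈ Xs j ∧ x ∈ Xs jstar) :=
        fun ⟨h1, h2⟩ => (Finset.disjoint_left.mp hdisjj h1) h2
      rw [hwdef]
      dsimp only
      by_cases h1 : x ∈ Xs j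
      · have h2 : x ∉ Xs jstar := fun h2 => hnb ⟨h1, h2⟩
        rw [if_pos h1, if_neg h2, if_pos h1, if_neg h2]; ring
      · by_cases h2 : x ∈ Xs jstar
        · rw [if_neg h1, if_pos h2, if_neg h1, if_pos h2]; ring
        · rw [if_neg h1, if_neg h2, if_neg h1, if_neg h2]; ring
    have hsum_ite : ∀ Y : Finset (Pt d), Y ⊆ X →
        ∑ x ∈ X, (if x ∈ Y then Phi Ci {x} else 0) = Phi Ci Y := by
      intro Y hY
      rw [← Finset.sum_filter, Finset.filter_mem_eq_inter,
        Finset.inter_eq_right.mpr hY, ← Phi_eq_sum]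
    have hcompute : (∑ x : {x // x ∈ X}, p x * w j (x : Pt d))
        = (ΦX + Phi Ci (Xs j) - (1 / 2) * Phi Ci (Xs jstar)) / ΦX := by
      rw [hpdef]
      dsimp only
      have : ∀ x : {x // x ∈ X},
          Phi Ci {(x : Pt d)} / ΦX * w j (x : Pt d)
            = (Phi Ci {(x : Pt d)} * w j (x : Pt d)) / ΦX := fun x => by ring
      rw [Finset.sum_congr rfl fun x _ => this x, ← Finset.sum_div]
      congr 1
      rw [Finset.univ_eq_attach, Finset.sum_attach X (fun y => Phi Ci {y} * w j y),
        Finset.sum_congr rfl hpt, Finset.sum_sub_distrib, Finset.sum_add_distrib,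
        ← Finset.mul_sum, ← Phi_eq_sum, hsum_ite (Xs j) (hXsub j),
        hsum_ite (Xs jstar) (hXsub jstar)]
    constructor
    · rw [hcompute, div_le_iff₀ hΦpos]
      have hjlt : Phi Ci (Xs j) ≤ δ * ΦX := (lt_of_not_ge hjlight).le
      nlinarith
    · rw [hcompute]
      apply div_nonneg _ hΦpos.le
      have := Phi_nonneg Ci (Xs j)
      linarith
  -- the bad-event weight inequality
  have hbad : ∀ s ∈ (Finset.univ : Finset (Fin N → {x // x ∈ X})).filter
      (fun s => L.Nonempty ∧
        H.sup (fun j => (Finset.univ.filter (fun t : Fin N => (s t : Pt d) ∈ Xs j)).card) ≤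
        L.sup (fun j => (Finset.univ.filter (fun t : Fin N => (s t : Pt d) ∈ Xs j)).card)),
      1 ≤ ∑ j ∈ L, ∏ t, w j ((s t : Pt d)) := by
    intro s hs
    rw [Finset.mem_filter] at hs
    obtain ⟨-, hLne, hsuple⟩ := hs
    set cnt : Fin k → ℕ :=
      fun j => (Finset.univ.filter (fun t : Fin N => (s t : Pt d) ∈ Xs j)).card with hcnt
    obtain ⟨j0, hj0L, hj0eq⟩ := Finset.exists_mem_eq_sup L hLne cnt
    have hcle : cnt jstar ≤ cnt j0 := by
      calc cnt jstar ≤ H.sup cnt := Finset.le_sup hjsH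
        _ ≤ L.sup cnt := hsuple
        _ = cnt j0 := hj0eq
    have hprod : ∏ t, w j0 ((s t : Pt d))
        = 2 ^ cnt j0 * (1 / 2 : ℝ) ^ cnt jstar := by
      rw [hwdef]
      dsimp only
      rw [Finset.prod_mul_distrib]
      congr 1
      · rw [Finset.prod_ite, Finset.prod_const, Finset.prod_const, one_pow, mul_one]
      · rw [Finset.prod_ite, Finset.prod_const, Finset.prod_const, one_pow, mul_one]
    have h1 : (1 : ℝ) ≤ ∏ t, w j0 ((s t : Pt d)) := by
      rw [hprod, one_div, inv_pow, ← div_eq_mul_inv]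
      rw [one_le_div (by positivity)]
      exact pow_le_pow_right₀ one_le_two hcle
    calc (1 : ℝ) ≤ ∏ t, w j0 ((s t : Pt d)) := h1
      _ ≤ ∑ j ∈ L, ∏ t, w j ((s t : Pt d)) :=
          Finset.single_le_sum (f := fun j => ∏ t, w j ((s t : Pt d)))
            (fun j _ => Finset.prod_nonneg fun t _ => (hwpos j _).le) hj0L
  -- apply the probability core lemma
  have hmain : ∑ s ∈ (Finset.univ : Finset (Fin N → {x // x ∈ X})).filter
      (fun s => L.Nonempty ∧
        H.sup (fun j => (Finset.univ.filter (fun t : Fin N => (s t : Pt d) ∈ Xs j)).card) ≤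
        L.sup (fun j => (Finset.univ.filter (fun t : Fin N => (s t : Pt d) ∈ Xs j)).card)),
      ∏ t, p (s t) ≤ L.card * (1 - δ) ^ N :=
    prob_bound N p hpnonneg _ L (fun j x => w j (x : Pt d))
      (fun j x => (hwpos j _).le) hbad (1 - δ)
      (fun j hj => (hper j hj).1) (fun j hj => (hper j hj).2)
  -- numerics
  have hLcard : (L.card : ℝ) ≤ k := by
    exact_mod_cast le_trans (Finset.card_filter_le _ _) (le_of_eq (Finset.card_fin k))
  have hNreal : (2 ^ 12 * (k : ℝ) ^ 3) / ε ^ 2 ≤ N := by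
    rw [hN]; exact Nat.le_ceil _
  have hNe : (2 ^ 12 * (k : ℝ) ^ 3) ≤ (N : ℝ) * ε ^ 2 := by
    rw [div_le_iff₀ (by positivity)] at hNreal
    linarith
  have hNδ : 4 * (k : ℝ) ^ 2 ≤ (N : ℝ) * δ := by
    rw [hδdef, ← mul_div_assoc, le_div_iff₀ (show (0:ℝ) < 8 * (k:ℝ) by positivity)]
    have hNε : 2 ^ 13 * (k : ℝ) ^ 3 ≤ (N : ℝ) * ε := by
      nlinarith [mul_nonneg (mul_nonneg (Nat.cast_nonneg N : (0:ℝ) ≤ (N:ℝ)) hε0.le) (by linarith : (0:ℝ) ≤ 1/2 - ε)]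
    nlinarith
  have hbern : (1 - δ) ^ N * (1 + (N : ℝ) * δ) ≤ 1 := by
    have h1 : 1 + (N : ℝ) * δ ≤ (1 + δ) ^ N := one_add_mul_le_pow (by linarith) N
    have h2 : (1 - δ) ^ N * (1 + δ) ^ N ≤ 1 := by
      rw [← mul_pow]
      apply pow_le_one₀ (by nlinarith) (by nlinarith)
    calc (1 - δ) ^ N * (1 + (N : ℝ) * δ)
        ≤ (1 - δ) ^ N * (1 + δ) ^ N :=
          mul_le_mul_of_nonneg_left h1 (pow_nonneg (by linarith) N)
      _ ≤ 1 := h2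
  have hpow_nonneg : (0 : ℝ) ≤ (1 - δ) ^ N := pow_nonneg (by linarith) N
  have hfinal : (L.card : ℝ) * (1 - δ) ^ N ≤ 1 / (4 * k) := by
    rw [le_div_iff₀ (by positivity)]
    have h4 : 4 * (k : ℝ) ^ 2 * (1 - δ) ^ N ≤ 1 := by
      calc 4 * (k : ℝ) ^ 2 * (1 - δ) ^ N ≤ ((N : ℝ) * δ) * (1 - δ) ^ N :=
            mul_le_mul_of_nonneg_right hNδ hpow_nonneg
        _ ≤ (1 + (N : ℝ) * δ) * (1 - δ) ^ N := by
            apply mul_le_mul_of_nonneg_right _ hpow_nonneg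
            linarith
        _ ≤ 1 := by rw [mul_comm]; exact hbern
    nlinarith [mul_le_mul_of_nonneg_right hLcard hpow_nonneg]
  exact le_trans hmain hfinal
end
end

section
/- Let 0 < ε ≤ 1/2, let X ⊆ ℝ^d be finite and (k,ε)-irreducible with optimal k-means partition X₁,…,X_k, let 1 ≤ i < k, and let C_i be a set of i centers satisfying the invariant P(i). Let j ∈ {i+1,…,k} and s ∈ Y_j, and consider one sampling trial: draw x via D²-sampling from X w.r.t. C_i; if x ∈ X_j, output x with probability (ε/128)·Φ(C_i,{s})/Φ(C_i,{x}), and otherwise output ⊥. Then: (a) (ε/128)·Φ(C_i,{s})/Φ(C_i,{x}) ≤ 1 for every x ∈ X_j, so the trial is well defined; (b) for every x ∈ X_j, Pr[output = x] = (ε/128)·Φ(C_i,{s})/Φ(C_i,X); in particular every point of X_j is output with the same probability; (c) if moreover j ∈ J, then Pr[output ≠ ⊥] ≥ ε³/(2¹⁶·k). -/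
open Finset
open scoped BigOperators
open Classical

noncomputable section

variable {d : ℕ}

lemma sInf_img_nonneg (C : Finset (Pt d)) (x : Pt d) :
    0 ≤ sInf ((fun c => ‖x - c‖ ^ 2) '' (C : Set (Pt d))) := by
  apply Real.sInf_nonneg
  rintro y ⟨c, -, rfl⟩; positivity

lemma phi_nonneg (C X : Finset (Pt d)) : 0 ≤ Phi C X :=
  Finset.sum_nonneg fun x _ => sInf_img_nonneg C x

lemma img_bddBelow (C : Finset (Pt d)) (x : Pt d) :
    BddBelow ((fun c => ‖x - c‖ ^ 2) '' (C : Set (Pt d))) :=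
  ⟨0, by rintro y ⟨c, -, rfl⟩; positivity⟩

lemma phi_singleton (c : Pt d) (X : Finset (Pt d)) :
    Phi {c} X = ∑ x ∈ X, ‖x - c‖ ^ 2 := by
  simp [Phi]

lemma phi_pt_le {C : Finset (Pt d)} {c : Pt d} (hc : c ∈ C) (x : Pt d) :
    Phi C {x} ≤ ‖x - c‖ ^ 2 := by
  rw [Phi, Finset.sum_singleton]
  exact csInf_le (img_bddBelow C x) ⟨c, by simpa using hc, rfl⟩

lemma phi_pt_nonneg (C : Finset (Pt d)) (x : Pt d) : 0 ≤ Phi C {x} :=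
  phi_nonneg C {x}

lemma phi_exists_min {C : Finset (Pt d)} (hC : C.Nonempty) (x : Pt d) :
    ∃ c ∈ C, Phi C {x} = ‖x - c‖ ^ 2 := by
  have hfin : ((fun c => ‖x - c‖ ^ 2) '' (C : Set (Pt d))).Finite :=
    C.finite_toSet.image _
  have hne : ((fun c => ‖x - c‖ ^ 2) '' (C : Set (Pt d))).Nonempty :=
    ⟨_, ⟨hC.choose, by simpa using hC.choose_spec, rfl⟩⟩
  have := hne.csInf_mem hfin
  obtain ⟨c, hc, hceq⟩ := this
  refine ⟨c, by simpa using hc, ?_⟩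
  rw [Phi, Finset.sum_singleton, ← hceq]

lemma phi_mono {C C' X : Finset (Pt d)} (h : C ⊆ C') (hC : C.Nonempty) :
    Phi C' X ≤ Phi C X := by
  apply Finset.sum_le_sum
  intro x _
  apply csInf_le_csInf (img_bddBelow C' x)
  · exact ⟨_, ⟨hC.choose, by simpa using hC.choose_spec, rfl⟩⟩
  · exact Set.image_mono (by exact_mod_cast h)

lemma phi_pts_sum (C Y : Finset (Pt d)) : Phi C Y = ∑ y ∈ Y, Phi C {y} := by
  unfold Phi
  exact Finset.sum_congr rfl fun y _ => (Finset.sum_singleton _ _).symm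

lemma deltaK_le {C X : Finset (Pt d)} {n : ℕ} (h : C.card = n) :
    DeltaK n X ≤ Phi C X := by
  apply csInf_le
  · exact ⟨0, by rintro y ⟨C', -, rfl⟩; exact phi_nonneg C' X⟩
  · exact ⟨C, h, rfl⟩

lemma deltaK_le' [Infinite (Pt d)] {C X : Finset (Pt d)} {n : ℕ}
    (hC : C.Nonempty) (h : C.card ≤ n) : DeltaK n X ≤ Phi C X := by
  obtain ⟨C', hsub, hcard⟩ := Infinite.exists_superset_card_eq C n h
  exact le_trans (deltaK_le hcard) (phi_mono hsub hC)

lemma pt_infinite (h : Nontrivial (Pt d)) : Infinite (Pt d) := by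
  obtain ⟨v, hv⟩ := exists_ne (0 : Pt d)
  exact Infinite.of_injective (fun t : ℝ => t • v) (smul_left_injective ℝ hv)

lemma delta1_nonneg (X : Finset (Pt d)) : 0 ≤ Delta1 X := phi_nonneg _ _

lemma sum_sq_eq {X : Finset (Pt d)} (hX : X.Nonempty) (p : Pt d) :
    ∑ x ∈ X, ‖x - p‖ ^ 2 = Delta1 X + (X.card : ℝ) * ‖p - ctr X‖ ^ 2 := by
  have hcard : (X.card : ℝ) ≠ 0 := by
    exact_mod_cast Finset.card_ne_zero_of_mem hX.choose_spec
  have hμ : ∑ x ∈ X, (x - ctr X) = 0 := by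
    rw [Finset.sum_sub_distrib, Finset.sum_const, ctr, ← Nat.cast_smul_eq_nsmul ℝ, smul_smul,
      mul_inv_cancel₀ hcard, one_smul, sub_self]
  have key : ∀ x : Pt d, ‖x - p‖ ^ 2 =
      ‖x - ctr X‖ ^ 2 - 2 * inner ℝ (x - ctr X) (p - ctr X) + ‖p - ctr X‖ ^ 2 := by
    intro x
    have : x - p = (x - ctr X) - (p - ctr X) := by abel
    rw [this, @norm_sub_sq_real]
  calc ∑ x ∈ X, ‖x - p‖ ^ 2
      = ∑ x ∈ X, (‖x - ctr X‖ ^ 2 - 2 * inner ℝ (x - ctr X) (p - ctr X) + ‖p - ctr X‖ ^ 2) :=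
        Finset.sum_congr rfl fun x _ => key x
    _ = (∑ x ∈ X, ‖x - ctr X‖ ^ 2) - 2 * inner ℝ (∑ x ∈ X, (x - ctr X)) (p - ctr X)
          + (X.card : ℝ) * ‖p - ctr X‖ ^ 2 := by
        rw [Finset.sum_add_distrib, Finset.sum_sub_distrib, Finset.sum_const,
          nsmul_eq_mul, ← Finset.mul_sum, sum_inner]
    _ = Delta1 X + (X.card : ℝ) * ‖p - ctr X‖ ^ 2 := by
        rw [hμ, inner_zero_left, Delta1, phi_singleton]; ring

section Part
variable {k : ℕ} {X : Finset (Pt d)} {Xs : Fin k → Finset (Pt d)}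

lemma phi_part (hdisj : ∀ j l : Fin k, j ≠ l → Disjoint (Xs j) (Xs l))
    (hcov : Finset.univ.biUnion Xs = X) (C : Finset (Pt d)) :
    Phi C X = ∑ r, Phi C (Xs r) := by
  rw [← hcov, Phi, Finset.sum_biUnion]
  · rfl
  · intro a _ b _ hab; exact hdisj a b hab

/-- dropping a cluster: separation of centroids. -/
lemma sep (ε : ℝ) (hε : 0 ≤ ε) (hirr : (1 + ε) * DeltaK k X ≤ DeltaK (k - 1) X)
    (hne : ∀ r, (Xs r).Nonempty)
    (hdisj : ∀ j l : Fin k, j ≠ l → Disjoint (Xs j) (Xs l))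
    (hcov : Finset.univ.biUnion Xs = X)
    (hsum : ∑ r, Delta1 (Xs r) = DeltaK k X)
    [Infinite (Pt d)] (hk2 : 2 ≤ k)
    (p q : Fin k) (hpq : p ≠ q) :
    ε * Delta1 (Xs q) ≤ ((Xs q).card : ℝ) * ‖ctr (Xs p) - ctr (Xs q)‖ ^ 2 := by
  set μ : Fin k → Pt d := fun r => ctr (Xs r) with hμ
  set C' : Finset (Pt d) := Finset.image μ (Finset.univ.erase q) with hC'
  have hqmem : q ∈ (Finset.univ : Finset (Fin k)) := Finset.mem_univ q
  have hpe : p ∈ Finset.univ.erase q := Finset.mem_erase.2 ⟨hpq, Finset.mem_univ p⟩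
  have hC'ne : C'.Nonempty := ⟨μ p, Finset.mem_image_of_mem μ hpe⟩
  have hcard : C'.card ≤ k - 1 := by
    calc C'.card ≤ (Finset.univ.erase q).card := Finset.card_image_le
      _ = k - 1 := by rw [Finset.card_erase_of_mem hqmem, Finset.card_univ, Fintype.card_fin]
  have hbound : Phi C' X ≤ DeltaK k X + ((Xs q).card : ℝ) * ‖μ p - μ q‖ ^ 2 := by
    rw [phi_part hdisj hcov]
    have h1 : ∀ r, Phi C' (Xs r) ≤
        Delta1 (Xs r) + (if r = q then ((Xs q).card : ℝ) * ‖μ p - μ q‖ ^ 2 else 0) := by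
      intro r
      by_cases hr : r = q
      · subst hr
        have : Phi C' (Xs r) ≤ Phi {μ p} (Xs r) :=
          phi_mono (Finset.singleton_subset_iff.2 (Finset.mem_image_of_mem μ hpe)) (Finset.singleton_nonempty _)
        rw [if_pos rfl]
        calc Phi C' (Xs r) ≤ Phi {μ p} (Xs r) := this
          _ = ∑ x ∈ Xs r, ‖x - μ p‖ ^ 2 := phi_singleton _ _
          _ = Delta1 (Xs r) + ((Xs r).card : ℝ) * ‖μ p - ctr (Xs r)‖ ^ 2 :=
            sum_sq_eq (hne r) (μ p)
      · rw [if_neg hr]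
        have hrm : μ r ∈ C' := Finset.mem_image_of_mem μ
          (Finset.mem_erase.2 ⟨hr, Finset.mem_univ r⟩)
        have : Phi C' (Xs r) ≤ Phi {μ r} (Xs r) :=
          phi_mono (Finset.singleton_subset_iff.2 hrm) (Finset.singleton_nonempty _)
        simpa [Delta1] using this
    calc ∑ r, Phi C' (Xs r)
        ≤ ∑ r, (Delta1 (Xs r) + (if r = q then ((Xs q).card : ℝ) * ‖μ p - μ q‖ ^ 2 else 0)) :=
          Finset.sum_le_sum fun r _ => h1 r
      _ = DeltaK k X + ((Xs q).card : ℝ) * ‖μ p - μ q‖ ^ 2 := by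
          rw [Finset.sum_add_distrib, hsum, Finset.sum_ite_eq' Finset.univ q]
          simp
  have hdk : DeltaK (k - 1) X ≤ Phi C' X := deltaK_le' hC'ne hcard
  have hq_le : Delta1 (Xs q) ≤ DeltaK k X := by
    rw [← hsum]
    exact Finset.single_le_sum (fun r _ => delta1_nonneg (Xs r)) (Finset.mem_univ q)
  have h2 := mul_le_mul_of_nonneg_left hq_le hε
  nlinarith

end Part

section Near
variable {k : ℕ} {X : Finset (Pt d)} {Xs : Fin k → Finset (Pt d)}

lemma nearest_ctr (hne : ∀ r, (Xs r).Nonempty)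
    (hdisj : ∀ j l : Fin k, j ≠ l → Disjoint (Xs j) (Xs l))
    (hcov : Finset.univ.biUnion Xs = X)
    (hsum : ∑ r, Delta1 (Xs r) = DeltaK k X)
    [Infinite (Pt d)] (hk : 0 < k) :
    ∀ q : Fin k, ∀ x ∈ Xs q, ∀ p : Fin k, ‖x - ctr (Xs q)‖ ≤ ‖x - ctr (Xs p)‖ := by
  set μ : Fin k → Pt d := fun r => ctr (Xs r) with hμdef
  set M : Finset (Pt d) := Finset.image μ Finset.univ with hM
  have hMne : M.Nonempty := ⟨μ ⟨0, hk⟩, Finset.mem_image_of_mem μ (Finset.mem_univ _)⟩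
  have hmem : ∀ r, μ r ∈ M := fun r => Finset.mem_image_of_mem μ (Finset.mem_univ r)
  have hub : ∀ r, Phi M (Xs r) ≤ Delta1 (Xs r) := by
    intro r
    have := phi_mono (Finset.singleton_subset_iff.2 (hmem r)) (Finset.singleton_nonempty _)
      (X := Xs r)
    simpa [Delta1] using this
  have hcardM : M.card ≤ k := by
    calc M.card ≤ Finset.univ.card := Finset.card_image_le
      _ = k := by rw [Finset.card_univ, Fintype.card_fin]
  have hup : Phi M X ≤ ∑ r, Delta1 (Xs r) := by
    rw [phi_part hdisj hcov]
    exact Finset.sum_le_sum fun r _ => hub r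
  have hlow : ∑ r, Delta1 (Xs r) ≤ Phi M X := by
    rw [hsum]; exact deltaK_le' hMne hcardM
  -- per-cluster equality
  have hcl : ∀ r, Phi M (Xs r) = Delta1 (Xs r) := by
    have hzero : ∑ r, (Delta1 (Xs r) - Phi M (Xs r)) = 0 := by
      rw [Finset.sum_sub_distrib, phi_part hdisj hcov] at *
      linarith
    have := (Finset.sum_eq_zero_iff_of_nonneg
      (fun r _ => by have := hub r; linarith)).1 hzero
    intro r
    have := this r (Finset.mem_univ r)
    linarith
  intro q x hx p
  -- pointwise equality within cluster q
  have hptub : ∀ y ∈ Xs q, Phi M {y} ≤ ‖y - μ q‖ ^ 2 := fun y _ => phi_pt_le (hmem q) y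
  have hzero : ∑ y ∈ Xs q, (‖y - μ q‖ ^ 2 - Phi M {y}) = 0 := by
    rw [Finset.sum_sub_distrib, ← phi_pts_sum, hcl q]
    have : Delta1 (Xs q) = ∑ y ∈ Xs q, ‖y - μ q‖ ^ 2 := phi_singleton _ _
    linarith
  have hpt := (Finset.sum_eq_zero_iff_of_nonneg
    (fun y hy => by have := hptub y hy; linarith)).1 hzero x hx
  have h1 : ‖x - μ q‖ ^ 2 = Phi M {x} := by linarith
  have h2 : Phi M {x} ≤ ‖x - μ p‖ ^ 2 := phi_pt_le (hmem p) x
  have h3 : ‖x - μ q‖ ^ 2 ≤ ‖x - μ p‖ ^ 2 := by linarith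
  nlinarith [norm_nonneg (x - μ q), norm_nonneg (x - μ p)]

end Near

set_option maxHeartbeats 1000000
/-- Under the invariant `P(i)` (clusters reindexed so the covered clusters
are `X₁, …, X_i`), let `j ∈ {i+1,…,k}` and let `s ∈ Y_j`. Consider one sampling trial:
draw `x` by `D²`-sampling w.r.t. `C_i`; if `x ∈ X_j`, output `x` with probability
`(ε/128)·Φ(C_i,{s})/Φ(C_i,{x})`, else output `⊥`. Then:
(a) the acceptance probability is at most `1` for every `x ∈ X_j` (the trial is well
defined); (b) for every `x ∈ X_j`, `Pr[output = x]`, which equals the `D²`-probability of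
`x` times the acceptance probability, is `(ε/128)·Φ(C_i,{s})/Φ(C_i,X)` — the same for all
points of `X_j`; (c) if moreover `j ∈ J`, then `Pr[output ≠ ⊥] ≥ ε³/(2¹⁶·k)`. -/
theorem stmt_14 {d k : ℕ} (ε : ℝ) (hε0 : 0 < ε) (hε : ε ≤ 1 / 2)
    (X : Finset (Pt d)) (hirr : KIrreducible k ε X)
    (Xs : Fin k → Finset (Pt d)) (hopt : IsOptPartition k X Xs)
    (i : ℕ) (hi : 1 ≤ i) (hik : i < k)
    (c : Fin k → Pt d) (Ci : Finset (Pt d)) (hinv : InvariantP ε X Xs i c Ci)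
    (j : Fin k) (hj : i ≤ j.val) (s : Pt d) (hsX : s ∈ Xs j)
    (hsY : Phi Ci {s} ≤ (2 / ((Xs j).card : ℝ)) * Phi Ci (Xs j)) :
    (∀ x ∈ Xs j, (ε / 128) * Phi Ci {s} / Phi Ci {x} ≤ 1) ∧
    (∀ x ∈ Xs j,
      (Phi Ci {x} / Phi Ci X) * ((ε / 128) * Phi Ci {s} / Phi Ci {x}) =
        (ε / 128) * Phi Ci {s} / Phi Ci X) ∧
    ((ε / (8 * k)) * Phi Ci X ≤ Phi Ci (Xs j) →
      ε ^ 3 / (2 ^ 16 * k) ≤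
        ∑ x ∈ Xs j, (Phi Ci {x} / Phi Ci X) * ((ε / 128) * Phi Ci {s} / Phi Ci {x})) := by
  obtain ⟨hCi_eq, hgood, hpos⟩ := hinv
  obtain ⟨hne, hdisj, hcov, hsum⟩ := hopt
  have hk0 : 0 < k := lt_of_le_of_lt (Nat.zero_le i) hik
  have hk2 : 2 ≤ k := by omega
  have h0i : (0 : ℕ) < i := hi
  have hCine : Ci.Nonempty := by
    rw [hCi_eq]
    exact ⟨c ⟨0, hk0⟩, Finset.mem_image_of_mem _
      (Finset.mem_filter.2 ⟨Finset.mem_univ _, h0i⟩)⟩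
  -- dimension 0 is impossible
  rcases subsingleton_or_nontrivial (Pt d) with hsub | hnt
  · exfalso
    obtain ⟨c₀, hc₀⟩ := hCine
    have hle : Phi Ci X ≤ 0 := by
      apply Finset.sum_nonpos
      intro x _
      have h1 := csInf_le (img_bddBelow Ci x) ⟨c₀, by simpa using hc₀, rfl⟩
      have h2 : ‖x - c₀‖ ^ 2 = 0 := by
        rw [Subsingleton.elim (x - c₀) 0]; simp
      simp only [h2] at h1
      exact h1
    linarith
  haveI : Infinite (Pt d) := pt_infinite hnt
  have hmj_pos : (0 : ℝ) < ((Xs j).card : ℝ) := by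
    exact_mod_cast Finset.card_pos.2 (hne j)
  have hΦXj_nonneg : 0 ≤ Phi Ci (Xs j) := phi_nonneg _ _
  -- the key pointwise lower bound
  have key : ∀ x ∈ Xs j, ε / 32 * Phi Ci (Xs j) ≤ ((Xs j).card : ℝ) * Phi Ci {x} := by
    intro x hx
    obtain ⟨c', hc'Ci, hmin⟩ := phi_exists_min hCine x
    rw [hCi_eq] at hc'Ci
    obtain ⟨p, hpfil, rfl⟩ := Finset.mem_image.1 hc'Ci
    have hp : p.val < i := (Finset.mem_filter.1 hpfil).2
    have hpj : p ≠ j := by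
      intro h; rw [h] at hp; omega
    have hcpCi : c p ∈ Ci := by rw [hCi_eq]; exact Finset.mem_image_of_mem _ hpfil
    set μp := ctr (Xs p) with hμp
    set μj := ctr (Xs j) with hμj
    set D := ‖μp - μj‖ with hD
    set δ := ‖c p - μp‖ with hδdef
    have hDnn : 0 ≤ D := norm_nonneg _
    have hδnn : 0 ≤ δ := norm_nonneg _
    have hmp_pos : (0 : ℝ) < ((Xs p).card : ℝ) := by
      exact_mod_cast Finset.card_pos.2 (hne p)
    have hΔp := delta1_nonneg (Xs p)
    have hΔj := delta1_nonneg (Xs j)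
    -- separation
    have hsep1 : ε * Delta1 (Xs j) ≤ ((Xs j).card : ℝ) * D ^ 2 :=
      sep ε hε0.le hirr hne hdisj hcov hsum hk2 p j hpj
    have hsep2 : ε * Delta1 (Xs p) ≤ ((Xs p).card : ℝ) * D ^ 2 := by
      have := sep ε hε0.le hirr hne hdisj hcov hsum hk2 j p (Ne.symm hpj)
      rwa [norm_sub_rev] at this
    -- the good-center bound
    have hδ2 : ((Xs p).card : ℝ) * δ ^ 2 ≤ ε / 16 * Delta1 (Xs p) := by
      have hg := hgood p hp
      have heq : Phi {c p} (Xs p) = Delta1 (Xs p) + ((Xs p).card : ℝ) * δ ^ 2 := by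
        rw [phi_singleton]; exact sum_sq_eq (hne p) (c p)
      rw [heq] at hg
      linarith
    -- δ ≤ D / 4
    have hδD : δ ≤ D / 4 := by
      have h1 : ε * (((Xs p).card : ℝ) * δ ^ 2) ≤ ε * (ε / 16 * Delta1 (Xs p)) :=
        mul_le_mul_of_nonneg_left hδ2 hε0.le
      have h2 : ε * (ε / 16 * Delta1 (Xs p)) ≤ ε / 16 * (((Xs p).card : ℝ) * D ^ 2) := by
        have := mul_le_mul_of_nonneg_left hsep2 (by positivity : (0:ℝ) ≤ ε/16)
        linarith
      have h3 : ((Xs p).card : ℝ) * δ ^ 2 ≤ ((Xs p).card : ℝ) * (D ^ 2 / 16) := by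
        have h4 : ε * (((Xs p).card : ℝ) * δ ^ 2) ≤ ε * (((Xs p).card : ℝ) * (D ^ 2 / 16)) := by
          linarith
        exact le_of_mul_le_mul_left h4 hε0
      have h5 : δ ^ 2 ≤ D ^ 2 / 16 := le_of_mul_le_mul_left (by linarith) hmp_pos
      nlinarith [sq_nonneg (D / 4 - δ), sq_nonneg (D / 4 + δ)]
    -- triangle inequalities
    have hnear : ‖x - μj‖ ≤ ‖x - μp‖ :=
      nearest_ctr hne hdisj hcov hsum hk0 j x hx p
    have htri : D ≤ 2 * ‖x - c p‖ + 2 * δ := by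
      have t1 : ‖μp - μj‖ ≤ ‖μp - x‖ + ‖x - μj‖ := by
        have := dist_triangle μp x μj
        simpa [dist_eq_norm] using this
      have t2 : ‖μp - x‖ = ‖x - μp‖ := norm_sub_rev _ _
      have t3 : ‖x - μp‖ ≤ ‖x - c p‖ + ‖c p - μp‖ := by
        have := dist_triangle x (c p) μp
        simpa [dist_eq_norm] using this
      rw [hD]
      calc ‖μp - μj‖ ≤ ‖μp - x‖ + ‖x - μj‖ := t1
        _ ≤ ‖x - μp‖ + ‖x - μp‖ := by rw [t2]; linarith
        _ ≤ 2 * ‖x - c p‖ + 2 * δ := by rw [hδdef]; linarith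
    have hxlow : D / 4 ≤ ‖x - c p‖ := by linarith
    have hΦx : D ^ 2 ≤ 16 * Phi Ci {x} := by
      rw [hmin]; nlinarith [norm_nonneg (x - c p)]
    -- average bound
    have havg : Phi Ci (Xs j) ≤ Delta1 (Xs j) + ((Xs j).card : ℝ) * (D + δ) ^ 2 := by
      have h1 : Phi Ci (Xs j) ≤ Phi {c p} (Xs j) :=
        phi_mono (Finset.singleton_subset_iff.2 hcpCi) (Finset.singleton_nonempty _)
      have h2 : Phi {c p} (Xs j) = Delta1 (Xs j) + ((Xs j).card : ℝ) * ‖c p - μj‖ ^ 2 := by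
        rw [phi_singleton]; exact sum_sq_eq (hne j) (c p)
      have h3 : ‖c p - μj‖ ≤ δ + D := by
        have := dist_triangle (c p) μp μj
        simpa [dist_eq_norm] using this
      have h4 : ‖c p - μj‖ ^ 2 ≤ (D + δ) ^ 2 := by
        nlinarith [norm_nonneg (c p - μj)]
      nlinarith
    -- put it together
    have hεavg : ε * Phi Ci (Xs j) ≤ ε * (Delta1 (Xs j) + ((Xs j).card : ℝ) * (D + δ) ^ 2) :=
      mul_le_mul_of_nonneg_left havg hε0.le
    have hDδ : ε * (D + δ) ^ 2 ≤ 25 / 32 * D ^ 2 := by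
      nlinarith [sq_nonneg (D + δ)]
    have hm1 : ((Xs j).card : ℝ) * (ε * (D + δ) ^ 2) ≤ ((Xs j).card : ℝ) * (25 / 32 * D ^ 2) :=
      mul_le_mul_of_nonneg_left hDδ hmj_pos.le
    have hm2 : ((Xs j).card : ℝ) * D ^ 2 ≤ ((Xs j).card : ℝ) * (16 * Phi Ci {x}) :=
      mul_le_mul_of_nonneg_left hΦx hmj_pos.le
    nlinarith [mul_nonneg hmj_pos.le (phi_pt_nonneg Ci x)]
  -- convert hsY to multiplied form
  have hsY' : Phi Ci {s} * ((Xs j).card : ℝ) ≤ 2 * Phi Ci (Xs j) := by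
    rw [div_mul_eq_mul_div, le_div_iff₀ hmj_pos] at hsY
    exact hsY
  -- part (a)
  have parta : ∀ x ∈ Xs j, (ε / 128) * Phi Ci {s} / Phi Ci {x} ≤ 1 := by
    intro x hx
    by_cases hx0 : Phi Ci {x} = 0
    · rw [hx0, div_zero]; exact zero_le_one
    · have hxpos : 0 < Phi Ci {x} := lt_of_le_of_ne (phi_pt_nonneg Ci x) (Ne.symm hx0)
      rw [div_le_one hxpos]
      have hk1 := key x hx
      have t1 : (ε / 128) * (Phi Ci {s} * ((Xs j).card : ℝ)) ≤ (ε / 128) * (2 * Phi Ci (Xs j)) :=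
        mul_le_mul_of_nonneg_left hsY' (by positivity)
      have hmm : ((Xs j).card : ℝ) * ((ε / 128) * Phi Ci {s}) ≤ ((Xs j).card : ℝ) * Phi Ci {x} := by
        nlinarith [mul_nonneg hmj_pos.le hxpos.le]
      exact le_of_mul_le_mul_left hmm hmj_pos
  -- part (b)
  have partb : ∀ x ∈ Xs j,
      (Phi Ci {x} / Phi Ci X) * ((ε / 128) * Phi Ci {s} / Phi Ci {x}) =
        (ε / 128) * Phi Ci {s} / Phi Ci X := by
    intro x hx
    by_cases hx0 : Phi Ci {x} = 0
    · have hXj0 : Phi Ci (Xs j) = 0 := by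
        have := key x hx
        rw [hx0, mul_zero] at this
        nlinarith
      have hs0 : Phi Ci {s} = 0 := by
        have h1 := phi_pt_nonneg Ci s
        rw [hXj0] at hsY'
        nlinarith
      rw [hx0, hs0]
      simp
    · field_simp
  refine ⟨parta, partb, ?_⟩
  -- part (c)
  intro hJ
  have hkR : (0 : ℝ) < (k : ℝ) := by exact_mod_cast hk0
  have hsum' : ∑ x ∈ Xs j, (Phi Ci {x} / Phi Ci X) * ((ε / 128) * Phi Ci {s} / Phi Ci {x}) =
      ((Xs j).card : ℝ) * ((ε / 128) * Phi Ci {s} / Phi Ci X) := by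
    rw [Finset.sum_congr rfl (fun x hx => partb x hx), Finset.sum_const, nsmul_eq_mul]
  rw [hsum']
  have hkey_s := key s hsX
  have heq : ((Xs j).card : ℝ) * ((ε / 128) * Phi Ci {s} / Phi Ci X) =
      (((Xs j).card : ℝ) * ((ε / 128) * Phi Ci {s})) / Phi Ci X := by ring
  rw [heq, le_div_iff₀ hpos]
  have t1 : (ε / 32) * ((ε / (8 * k)) * Phi Ci X) ≤ (ε / 32) * Phi Ci (Xs j) :=
    mul_le_mul_of_nonneg_left hJ (by positivity)
  have t2 : (ε / 128) * ((ε / 32) * ((ε / (8 * k)) * Phi Ci X)) ≤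
      (ε / 128) * (((Xs j).card : ℝ) * Phi Ci {s}) := by
    have := le_trans t1 hkey_s
    exact mul_le_mul_of_nonneg_left this (by positivity)
  have hmonn : (0 : ℝ) ≤ ε ^ 3 * (k : ℝ)⁻¹ * Phi Ci X := by positivity
  have t3 : ε / 128 * (ε / 32 * (ε / (8 * (k:ℝ)) * Phi Ci X)) =
      ε ^ 3 * (k : ℝ)⁻¹ * Phi Ci X / 32768 := by
    field_simp
    ring
  have t4 : ε ^ 3 / (2 ^ 16 * (k:ℝ)) * Phi Ci X =
      ε ^ 3 * (k : ℝ)⁻¹ * Phi Ci X / 65536 := by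
    field_simp
    ring
  rw [t3] at t2
  rw [t4]
  linarith
end
end
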